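/- Let p be a prime and let F be a finite field of characteristic ℓ ≠ p with -1 ∈ (F^×)^p. If either ℓ is odd or |F| > (p+1)^4, then the p-unitary Cayley graph G_F(p) is not bipartite (i.e. it is not 2-colorable). -/

import Mathlib

/-- The `p`-unitary Cayley graph of a commutative ring `R`: vertices are elements of `R`,
and distinct `a, b` are adjacent iff `a - b` is a `p`-th power of a unit.
(When `-1 ∈ (Rˣ)^p`, the relation is symmetric, so `fromRel` gives exactly this graph.) -/
def pUnitaryCayley (R : Type*) [CommRing R] (p : ℕ) : SimpleGraph R :=
  SimpleGraph.fromRel (fun a b => ∃ u : Rˣ, a - b = (u : R) ^ p)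

/-- Along any walk, a `ZMod 2`-coloring changes by the length of the walk. -/
lemma coloring_walk_aux {V : Type*} {G : SimpleGraph V} (c : G.Coloring (ZMod 2))
    {u v : V} (w : G.Walk u v) : c v = c u + (w.length : ZMod 2) := by
  induction w with
  | nil => simp
  | @cons a b d hab q ih =>
    have hne : c a ≠ c b := c.valid hab
    have hkey : ∀ x y : ZMod 2, x ≠ y → y = x + 1 := by decide
    rw [ih, hkey _ _ hne]
    simp only [SimpleGraph.Walk.length_cons]
    push_cast
    ring

/-- A graph with a closed walk of odd length is not 2-colorable. -/
lemma not_colorable_two_of_odd_closed_walk {V : Type*} {G : SimpleGraph V}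
    {v : V} (w : G.Walk v v) (hodd : Odd w.length) : ¬ G.Colorable 2 := by
  rintro ⟨c⟩
  have hinj : ∀ x y : Fin 2, ((x : ℕ) : ZMod 2) = ((y : ℕ) : ZMod 2) → x = y := by decide
  let c' : G.Coloring (ZMod 2) :=
    SimpleGraph.Coloring.mk (fun x => (((c x : Fin 2) : ℕ) : ZMod 2))
      (fun {a b} hab hcc => c.valid hab (hinj _ _ hcc))
  have hw := coloring_walk_aux c' w
  have h0 : ((w.length : ℕ) : ZMod 2) = 0 := (left_eq_add.mp hw)
  obtain ⟨k, hk⟩ := hodd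
  rw [hk] at h0
  push_cast at h0
  have h2 : (2 : ZMod 2) = 0 := by decide
  rw [h2] at h0
  simp at h0

/-- Given a list of nonzero `p`-th powers of units, there is a walk in the `p`-unitary Cayley
graph from `a` to `a + L.sum` of length `L.length`. -/
lemma walk_of_list {F : Type*} [Field F] (p : ℕ) (L : List F) (a : F)
    (hL : ∀ x ∈ L, x ≠ 0 ∧ ∃ u : Fˣ, x = (u : F) ^ p) :
    ∃ w : (pUnitaryCayley F p).Walk a (a + L.sum), w.length = L.length := by
  induction L generalizing a with
  | nil => exact ⟨SimpleGraph.Walk.nil.copy rfl (by simp), by rw [SimpleGraph.Walk.length_copy]; rfl⟩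
  | cons x L ih =>
    obtain ⟨hx0, u, hu⟩ := hL x List.mem_cons_self
    have hadj : (pUnitaryCayley F p).Adj a (a + x) := by
      rw [pUnitaryCayley, SimpleGraph.fromRel_adj]
      refine ⟨by simp [hx0], Or.inr ⟨u, ?_⟩⟩
      rw [add_sub_cancel_left, hu]
    obtain ⟨w', hw'⟩ := ih (a + x) (fun y hy => hL y (List.mem_cons_of_mem x hy))
    refine ⟨((SimpleGraph.Walk.cons hadj w').copy rfl (by rw [List.sum_cons]; ring)), ?_⟩
    rw [SimpleGraph.Walk.length_copy, SimpleGraph.Walk.length_cons, hw', List.length_cons]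

theorem stmt_4 (p ℓ : ℕ) (hp : p.Prime) (hℓ : ℓ.Prime) (hne : ℓ ≠ p)
    (F : Type*) [Field F] [Fintype F] (hchar : CharP F ℓ)
    (hneg : ∃ u : Fˣ, (u : F) ^ p = -1)
    (h : Odd ℓ ∨ (p + 1) ^ 4 < Fintype.card F) :
    ¬ (pUnitaryCayley F p).Colorable 2 := by
  suffices key : ∃ L : List F,
      (∀ x ∈ L, x ≠ 0 ∧ ∃ u : Fˣ, x = (u : F) ^ p) ∧ L.sum = 0 ∧ Odd L.length by
    obtain ⟨L, hL, hsum, hodd⟩ := key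
    obtain ⟨w, hw⟩ := walk_of_list p L 0 hL
    exact not_colorable_two_of_odd_closed_walk (w.copy rfl (by rw [hsum, add_zero]))
      (by simpa [hw] using hodd)
  rcases hℓ.eq_two_or_odd' with hℓ2 | hodd
  swap
  · -- odd characteristic: walk 0, 1, 2, ..., ℓ = 0
    refine ⟨List.replicate ℓ (1 : F), ?_, ?_, ?_⟩
    · intro x hx
      rw [List.eq_of_mem_replicate hx]
      exact ⟨one_ne_zero, 1, by simp⟩
    · rw [List.sum_replicate, nsmul_eq_mul, mul_one, CharP.cast_eq_zero F ℓ]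
    · simpa using hodd
  · -- characteristic 2 and large field
    subst hℓ2
    classical
    have hcard : (p + 1) ^ 4 < Fintype.card F := by
      rcases h with h | h
      · exact absurd h (by decide)
      · exact h
    have hcard1 : 1 ≤ Fintype.card F := Fintype.card_pos
    -- there is a p-th power ≠ 1
    have hex : ∃ u : Fˣ, (u : F) ^ p ≠ 1 := by
      by_contra hall
      push_neg at hall
      obtain ⟨g, hg⟩ := IsCyclic.exists_generator (α := Fˣ)
      have horder : orderOf g = Nat.card Fˣ := orderOf_eq_card_of_forall_mem_zpowers hg
      have hg1 : g ^ p = 1 := by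
        ext
        push_cast
        exact hall g
      have hdvd : orderOf g ∣ p := orderOf_dvd_of_pow_eq_one hg1
      rw [horder, Nat.card_eq_fintype_card, Fintype.card_units] at hdvd
      have h1 : Fintype.card F - 1 ≤ p := Nat.le_of_dvd hp.pos hdvd
      have h2 : p + 1 ≤ (p + 1) ^ 4 := Nat.le_self_pow (by norm_num) _
      omega
    obtain ⟨v, hv⟩ := hex
    set T : Finset F := Finset.image (fun u : Fˣ => (u : F) ^ p) Finset.univ with hTdef
    have htT : (v : F) ^ p ∈ T := Finset.mem_image_of_mem _ (Finset.mem_univ v)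
    set t : F := (v : F) ^ p with htdef
    have ht0 : t ≠ 0 := pow_ne_zero _ (Units.ne_zero v)
    -- multiplication by t maps T to T bijectively
    have hmaps : ∀ x ∈ T, t * x ∈ T := by
      intro x hx
      obtain ⟨u, -, rfl⟩ := Finset.mem_image.mp hx
      refine Finset.mem_image.mpr ⟨v * u, Finset.mem_univ _, ?_⟩
      push_cast
      rw [mul_pow]
    have hinjmul : ∀ x ∈ T, ∀ y ∈ T, t * x = t * y → x = y := by
      intro x _ y _ hxy
      exact mul_left_cancel₀ ht0 hxy
    have himg : T.image (fun x => t * x) = T := by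
      apply Finset.eq_of_subset_of_card_le
      · intro y hy
        obtain ⟨x, hx, rfl⟩ := Finset.mem_image.mp hy
        exact hmaps x hx
      · rw [Finset.card_image_of_injOn hinjmul]
    have hsumT : ∑ x ∈ T, x = 0 := by
      have h1 : ∑ x ∈ T, x = t * ∑ x ∈ T, x := by
        conv_lhs => rw [← himg]
        rw [Finset.sum_image hinjmul, Finset.mul_sum]
      have h2 : (1 - t) * ∑ x ∈ T, x = 0 := by
        rw [sub_mul, one_mul, sub_eq_zero]
        exact h1
      rcases mul_eq_zero.mp h2 with h3 | h3
      · exact absurd (sub_eq_zero.mp h3).symm hv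
      · exact h3
    -- |T| is odd
    have hToddcard : Odd T.card := by
      set Tu : Finset Fˣ := Finset.image (fun u : Fˣ => u ^ p) Finset.univ with hTudef
      have hTcard : T.card = Tu.card := by
        have : T = Tu.image (fun u : Fˣ => (u : F)) := by
          rw [hTudef, Finset.image_image]
          ext x
          simp [hTdef, Units.val_pow_eq_pow_val]
        rw [this, Finset.card_image_of_injective _ Units.val_injective]
      have hdvd : Tu.card ∣ Fintype.card F - 1 := by
        have hset : (Tu : Set Fˣ) = ((powMonoidHom p : Fˣ →* Fˣ).range : Set Fˣ) := by
          ext x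
          simp [hTudef, powMonoidHom, eq_comm]
        have h1 : Tu.card = Nat.card ((powMonoidHom p : Fˣ →* Fˣ).range) := by
          calc Tu.card = (↑Tu : Set Fˣ).ncard := (Set.ncard_coe_finset _).symm
            _ = (((powMonoidHom p : Fˣ →* Fˣ).range : Subgroup Fˣ) : Set Fˣ).ncard := by
                rw [hset]
            _ = Nat.card (((powMonoidHom p : Fˣ →* Fˣ).range : Subgroup Fˣ) : Set Fˣ) :=
                (Nat.card_coe_set_eq _).symm
            _ = Nat.card ((powMonoidHom p : Fˣ →* Fˣ).range) := by rw [SetLike.coe_sort_coe]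
        rw [h1, ← Fintype.card_units (α := F), ← Nat.card_eq_fintype_card]
        exact Subgroup.card_subgroup_dvd_card _
      obtain ⟨n, -, hn⟩ := FiniteField.card F 2
      have heven : Even (Fintype.card F) := by
        rw [hn]
        exact Nat.even_pow.mpr ⟨even_two, n.pos.ne'⟩
      have hoddq : Odd (Fintype.card F - 1) :=
        Nat.Even.sub_odd hcard1 heven odd_one
      rcases Nat.even_or_odd Tu.card with he | ho
      · exact absurd ((even_iff_two_dvd.mp he).trans hdvd)
          (by rw [← even_iff_two_dvd]; exact (Nat.not_even_iff_odd.mpr hoddq))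
      · rw [hTcard]; exact ho
    refine ⟨T.toList, ?_, ?_, ?_⟩
    · intro x hx
      rw [Finset.mem_toList] at hx
      obtain ⟨u, -, hu⟩ := Finset.mem_image.mp hx
      exact ⟨hu ▸ pow_ne_zero _ (Units.ne_zero u), u, hu.symm⟩
    · have : T.toList.sum = ∑ x ∈ T, x := by
        rw [← Finset.sum_map_toList]
        simp
      rw [this, hsumT]
    · rw [Finset.length_toList]
      exact hToddcard
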